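/- Let E be a real Banach space and 1 ≤ q ≤ p < ∞. Then ‖·‖_{p,q} is a lattice norm on H_{p,q}[E]: ‖f‖_{p,q} = 0 if and only if f = 0, it is absolutely homogeneous and satisfies the triangle inequality, and |f| ≤ |g| pointwise implies ‖f‖_{p,q} ≤ ‖g‖_{p,q}. Moreover, ‖·‖_{p,q} is p-convex with constant 1: for every n ∈ ℕ and f_1,…,f_n ∈ H_{p,q}[E], the pointwise-defined function (Σ_{k=1}^n |f_k|^p)^{1/p} belongs to H_{p,q}[E] and ‖(Σ_{k=1}^n |f_k|^p)^{1/p}‖_{p,q} ≤ (Σ_{k=1}^n ‖f_k‖_{p,q}^p)^{1/p}. -/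

import Mathlib

open scoped ENNReal

/-- A function `f : E* → ℝ` is positively homogeneous. -/
def PosHomog {E : Type*} [NormedAddCommGroup E] [NormedSpace ℝ E]
    (f : (E →L[ℝ] ℝ) → ℝ) : Prop :=
  ∀ (c : ℝ), 0 ≤ c → ∀ φ : E →L[ℝ] ℝ, f (c • φ) = c * f φ

/-- The weak `q`-summing norm of a finite family in `E*`. -/
noncomputable def weakSumNorm {E : Type*} [NormedAddCommGroup E] [NormedSpace ℝ E]
    (q : ℝ) {n : ℕ} (xs : Fin n → (E →L[ℝ] ℝ)) : ℝ :=
  sSup ((fun x : E => (∑ k, |xs k x| ^ q) ^ (1 / q)) '' Metric.closedBall 0 1)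

/-- The `(p,q)`-summing norm of `f : E* → ℝ`, with values in `[0,∞]`. -/
noncomputable def pqNorm {E : Type*} [NormedAddCommGroup E] [NormedSpace ℝ E]
    (p q : ℝ) (f : (E →L[ℝ] ℝ) → ℝ) : ℝ≥0∞ :=
  ⨆ (n : ℕ) (xs : Fin n → (E →L[ℝ] ℝ)) (_ : weakSumNorm q xs ≤ 1),
    ENNReal.ofReal ((∑ k, |f (xs k)| ^ p) ^ (1 / p))

section helper
variable {E : Type*} [NormedAddCommGroup E] [NormedSpace ℝ E]

lemma le_pqNorm (p q : ℝ) (f : (E →L[ℝ] ℝ) → ℝ) {n : ℕ} {xs : Fin n → (E →L[ℝ] ℝ)}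
    (h : weakSumNorm q xs ≤ 1) :
    ENNReal.ofReal ((∑ k, |f (xs k)| ^ p) ^ (1 / p)) ≤ pqNorm p q f :=
  le_iSup_of_le n (le_iSup_of_le xs (le_iSup_of_le h le_rfl))

lemma pqNorm_le {p q : ℝ} {f : (E →L[ℝ] ℝ) → ℝ} {C : ℝ≥0∞}
    (h : ∀ (n : ℕ) (xs : Fin n → (E →L[ℝ] ℝ)), weakSumNorm q xs ≤ 1 →
      ENNReal.ofReal ((∑ k, |f (xs k)| ^ p) ^ (1 / p)) ≤ C) :
    pqNorm p q f ≤ C :=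
  iSup_le fun n => iSup_le fun xs => iSup_le fun hxs => h n xs hxs

lemma weakSumNorm_single {q : ℝ} (hq : 1 ≤ q) {φ : E →L[ℝ] ℝ} (hφ : ‖φ‖ ≤ 1) :
    weakSumNorm q ![φ] ≤ 1 := by
  apply Real.sSup_le _ zero_le_one
  rintro y ⟨x, hx, rfl⟩
  rw [Metric.mem_closedBall, dist_zero_right] at hx
  have hq0 : q ≠ 0 := by positivity
  simp only [Fin.sum_univ_one, Matrix.cons_val_zero]
  rw [← Real.rpow_mul (abs_nonneg _), mul_one_div_cancel hq0, Real.rpow_one]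
  calc |φ x| = ‖φ x‖ := (Real.norm_eq_abs _).symm
    _ ≤ ‖φ‖ * ‖x‖ := φ.le_opNorm x
    _ ≤ 1 * 1 := mul_le_mul hφ hx (norm_nonneg _) zero_le_one
    _ = 1 := one_mul 1

/-- factor a nonnegative scalar out of an `ℓ^p` sum. -/
lemma rpow_sum_factor {p : ℝ} (hp : 0 < p) {n : ℕ} {c : ℝ} (hc : 0 ≤ c)
    {a : Fin n → ℝ} (ha : ∀ k, 0 ≤ a k) :
    (∑ k, (c * a k) ^ p) ^ (1 / p) = c * (∑ k, a k ^ p) ^ (1 / p) := by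
  have h1 : ∑ k, (c * a k) ^ p = c ^ p * ∑ k, a k ^ p := by
    rw [Finset.mul_sum]
    exact Finset.sum_congr rfl fun k _ => Real.mul_rpow hc (ha k)
  rw [h1, Real.mul_rpow (Real.rpow_nonneg hc p)
      (Finset.sum_nonneg fun k _ => Real.rpow_nonneg (ha k) p),
    ← Real.rpow_mul hc, mul_one_div_cancel hp.ne', Real.rpow_one]

end helper

/-- For `1 ≤ q ≤ p < ∞`, `‖·‖_{p,q}` is a lattice norm on `H_{p,q}[E]`
which is `p`-convex with constant `1`. -/
theorem pqNorm_is_pConvex_lattice_norm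
    (E : Type*) [NormedAddCommGroup E] [NormedSpace ℝ E] [CompleteSpace E]
    (p q : ℝ) (hq : 1 ≤ q) (hqp : q ≤ p) :
    -- `‖f‖_{p,q} = 0` iff `f = 0`
    (∀ f : (E →L[ℝ] ℝ) → ℝ, PosHomog f → pqNorm p q f < ⊤ →
      (pqNorm p q f = 0 ↔ f = 0)) ∧
    -- absolute homogeneity
    (∀ (c : ℝ) (f : (E →L[ℝ] ℝ) → ℝ), PosHomog f → pqNorm p q f < ⊤ →
      pqNorm p q (fun φ => c * f φ) = ENNReal.ofReal |c| * pqNorm p q f) ∧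
    -- triangle inequality
    (∀ f g : (E →L[ℝ] ℝ) → ℝ, PosHomog f → pqNorm p q f < ⊤ →
      PosHomog g → pqNorm p q g < ⊤ →
      pqNorm p q (fun φ => f φ + g φ) ≤ pqNorm p q f + pqNorm p q g) ∧
    -- lattice norm property: `|f| ≤ |g|` pointwise implies `‖f‖_{p,q} ≤ ‖g‖_{p,q}`
    (∀ f g : (E →L[ℝ] ℝ) → ℝ, PosHomog f → PosHomog g →
      (∀ φ : E →L[ℝ] ℝ, |f φ| ≤ |g φ|) → pqNorm p q f ≤ pqNorm p q g) ∧
    -- `p`-convexity with constant `1`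
    (∀ (n : ℕ) (F : Fin n → (E →L[ℝ] ℝ) → ℝ),
      (∀ k, PosHomog (F k) ∧ pqNorm p q (F k) < ⊤) →
      PosHomog (fun φ => (∑ k, |F k φ| ^ p) ^ (1 / p)) ∧
      pqNorm p q (fun φ => (∑ k, |F k φ| ^ p) ^ (1 / p)) < ⊤ ∧
      pqNorm p q (fun φ => (∑ k, |F k φ| ^ p) ^ (1 / p)) ≤
        (∑ k, pqNorm p q (F k) ^ p) ^ (1 / p)) := by
  have hp : 1 ≤ p := hq.trans hqp
  have hp0 : 0 < p := lt_of_lt_of_le one_pos hp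
  -- the single-abs simplification
  have habs : ∀ a : ℝ, (|a| ^ p) ^ (1 / p) = |a| := fun a => by
    rw [← Real.rpow_mul (abs_nonneg a), mul_one_div_cancel hp0.ne', Real.rpow_one]
  refine ⟨?_, ?_, ?_, ?_, ?_⟩
  · -- zero iff
    intro f hf _
    constructor
    · intro h0
      have key : ∀ φ : E →L[ℝ] ℝ, ‖φ‖ ≤ 1 → f φ = 0 := by
        intro φ hφ
        have h1 := le_pqNorm p q f (weakSumNorm_single hq hφ)
        rw [h0] at h1
        simp only [Fin.sum_univ_one, Matrix.cons_val_zero, habs,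
          nonpos_iff_eq_zero, ENNReal.ofReal_eq_zero] at h1
        exact abs_eq_zero.mp (le_antisymm h1 (abs_nonneg _))
      funext φ
      show f φ = 0
      by_cases hφ0 : φ = 0
      · have := hf 0 le_rfl 0
        simpa [hφ0] using this
      · have hn : (0:ℝ) < ‖φ‖ := norm_pos_iff.mpr hφ0
        have hdec : φ = ‖φ‖ • (‖φ‖⁻¹ • φ) := (smul_inv_smul₀ hn.ne' φ).symm
        have hψ : ‖‖φ‖⁻¹ • φ‖ ≤ 1 := by
          rw [norm_smul ‖φ‖⁻¹ φ, norm_inv, norm_norm, inv_mul_cancel₀ hn.ne']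
        have h2 := hf ‖φ‖ (norm_nonneg φ) (‖φ‖⁻¹ • φ)
        rw [← hdec] at h2
        rw [h2, key _ hψ, mul_zero]
    · rintro rfl
      refine le_antisymm (pqNorm_le fun n xs _ => ?_) zero_le
      simp [Real.zero_rpow hp0.ne', Real.zero_rpow (inv_ne_zero hp0.ne'), Real.zero_rpow (by positivity : (1:ℝ)/p ≠ 0)]
  · -- homogeneity
    intro c f _ _
    have key : ∀ (n : ℕ) (xs : Fin n → (E →L[ℝ] ℝ)),
        ENNReal.ofReal ((∑ k, |c * f (xs k)| ^ p) ^ (1 / p)) =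
        ENNReal.ofReal |c| * ENNReal.ofReal ((∑ k, |f (xs k)| ^ p) ^ (1 / p)) := by
      intro n xs
      rw [← ENNReal.ofReal_mul (abs_nonneg c)]
      congr 1
      rw [← rpow_sum_factor hp0 (abs_nonneg c) (fun k => abs_nonneg _)]
      exact congrArg (· ^ (1/p)) (Finset.sum_congr rfl fun k _ => by rw [abs_mul])
    unfold pqNorm
    simp_rw [key, ← ENNReal.mul_iSup]
  · -- triangle
    intro f g _ _ _ _
    refine pqNorm_le fun n xs hxs => ?_
    calc ENNReal.ofReal ((∑ k, |f (xs k) + g (xs k)| ^ p) ^ (1 / p))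
        ≤ ENNReal.ofReal ((∑ k, |f (xs k)| ^ p) ^ (1 / p)
            + (∑ k, |g (xs k)| ^ p) ^ (1 / p)) :=
          ENNReal.ofReal_le_ofReal (Real.Lp_add_le _ _ _ hp)
      _ ≤ ENNReal.ofReal ((∑ k, |f (xs k)| ^ p) ^ (1 / p))
            + ENNReal.ofReal ((∑ k, |g (xs k)| ^ p) ^ (1 / p)) := ENNReal.ofReal_add_le
      _ ≤ pqNorm p q f + pqNorm p q g := add_le_add (le_pqNorm p q f hxs) (le_pqNorm p q g hxs)
  · -- lattice property
    intro f g _ _ hfg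
    refine pqNorm_le fun n xs hxs => le_trans ?_ (le_pqNorm p q g hxs)
    refine ENNReal.ofReal_le_ofReal (Real.rpow_le_rpow (by positivity) ?_ (by positivity))
    exact Finset.sum_le_sum fun k _ =>
      Real.rpow_le_rpow (abs_nonneg _) (hfg (xs k)) hp0.le
  · -- p-convexity
    intro n F hF
    have hGhom : PosHomog (fun φ => (∑ k, |F k φ| ^ p) ^ (1 / p)) := by
      intro c hc φ
      have : ∀ k : Fin n, |F k (c • φ)| = c * |F k φ| := fun k => by
        rw [(hF k).1 c hc φ, abs_mul, abs_of_nonneg hc]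
      simp_rw [this]
      exact rpow_sum_factor hp0 hc fun k => abs_nonneg _
    -- the real bound
    set a : Fin n → ℝ := fun k => (pqNorm p q (F k)).toReal with ha
    have hane : ∀ k, 0 ≤ a k := fun k => ENNReal.toReal_nonneg
    have hbound : pqNorm p q (fun φ => (∑ k, |F k φ| ^ p) ^ (1 / p)) ≤
        ENNReal.ofReal ((∑ k, a k ^ p) ^ (1 / p)) := by
      refine pqNorm_le fun m xs hxs => ?_
      refine ENNReal.ofReal_le_ofReal ?_
      refine Real.rpow_le_rpow (by positivity) ?_ (by positivity)
      have hGj : ∀ j : Fin m, |(∑ k, |F k (xs j)| ^ p) ^ (1 / p)| ^ p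
          = ∑ k, |F k (xs j)| ^ p := by
        intro j
        rw [abs_of_nonneg (Real.rpow_nonneg (by positivity) _),
          ← Real.rpow_mul (by positivity), one_div_mul_cancel hp0.ne', Real.rpow_one]
      calc ∑ j, |(∑ k, |F k (xs j)| ^ p) ^ (1 / p)| ^ p
          = ∑ j, ∑ k, |F k (xs j)| ^ p := Finset.sum_congr rfl fun j _ => hGj j
        _ = ∑ k, ∑ j, |F k (xs j)| ^ p := Finset.sum_comm
        _ ≤ ∑ k, a k ^ p := by
            refine Finset.sum_le_sum fun k _ => ?_
            have h1 : (∑ j, |F k (xs j)| ^ p) ^ (1 / p) ≤ a k := by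
              rw [ha]
              exact (ENNReal.ofReal_le_iff_le_toReal (hF k).2.ne).mp
                (le_pqNorm p q (F k) hxs)
            calc ∑ j, |F k (xs j)| ^ p
                = ((∑ j, |F k (xs j)| ^ p) ^ (1 / p)) ^ p := by
                  rw [← Real.rpow_mul (by positivity), one_div_mul_cancel hp0.ne',
                    Real.rpow_one]
              _ ≤ a k ^ p := Real.rpow_le_rpow (by positivity) h1 hp0.le
    have hRHS : (∑ k, pqNorm p q (F k) ^ p) ^ (1 / p)
        = ENNReal.ofReal ((∑ k, a k ^ p) ^ (1 / p)) := by
      have h1 : ∀ k : Fin n, pqNorm p q (F k) ^ p = ENNReal.ofReal (a k ^ p) := by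
        intro k
        rw [← ENNReal.ofReal_rpow_of_nonneg (hane k) hp0.le, ha,
          ENNReal.ofReal_toReal (hF k).2.ne]
      rw [Finset.sum_congr rfl fun k _ => h1 k,
        ← ENNReal.ofReal_sum_of_nonneg fun k _ => Real.rpow_nonneg (hane k) p,
        ENNReal.ofReal_rpow_of_nonneg
          (Finset.sum_nonneg fun k _ => Real.rpow_nonneg (hane k) p) (by positivity)]
    refine ⟨hGhom, lt_of_le_of_lt hbound ENNReal.ofReal_lt_top, ?_⟩
    rw [hRHS]
    exact hbound
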